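/- For t = 1/20 and x ∈ (0.6044, 0.6554), applying the Choi map φ to the first tensor factor of the state ρ(x,t) yields a positive semidefinite operator (φ⊗I_3)(ρ(x,t)); i.e., the Choi map applied directly fails to detect the entanglement of ρ(x,t) in this parameter range. -/

import Mathlib

open Matrix
open scoped ComplexOrder


/-- Diagonal entries of the unnormalized state: in the paper's ordering
`(1+t, t, 1/t, 1/t, 1+t, t, 1, 1/t, 1)`. -/
noncomputable def diagEntry (t : ℝ) : Fin 3 × Fin 3 → ℝ
  | (0, 0) => 1 + t
  | (0, 1) => t
  | (0, 2) => 1 / t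
  | (1, 0) => 1 / t
  | (1, 1) => 1 + t
  | (1, 2) => t
  | (2, 0) => 1
  | (2, 1) => 1 / t
  | (2, 2) => 1

/-- The (upper) positions carrying the entry `x`, i.e. (1,5),(1,9),(5,9),(2,4),(3,7),(6,8)
in the 1-indexed `9 × 9` labelling with index `(i,k) ↦ 3i + k + 1`. -/
def xPos (p q : Fin 3 × Fin 3) : Prop :=
  (p = (0, 0) ∧ q = (1, 1)) ∨ (p = (0, 0) ∧ q = (2, 2)) ∨ (p = (1, 1) ∧ q = (2, 2)) ∨
  (p = (0, 1) ∧ q = (1, 0)) ∨ (p = (0, 2) ∧ q = (2, 0)) ∨ (p = (1, 2) ∧ q = (2, 1))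

instance : DecidableRel xPos := fun p q => by unfold xPos; infer_instance

/-- The two-parameter state `ρ(x,t)` of the paper, with normalization
`K = 1/(4 + 3/t + 4t)`. -/
noncomputable def rhoXT (x t : ℝ) : Matrix (Fin 3 × Fin 3) (Fin 3 × Fin 3) ℂ :=
  Matrix.of fun p q =>
    ((1 / (4 + 3 / t + 4 * t) : ℝ) : ℂ) *
      (if p = q then ((diagEntry t p : ℝ) : ℂ)
       else if xPos p q ∨ xPos q p then (x : ℂ) else 0)

/-- The Choi map `φ` on 3×3 complex matrices. -/
noncomputable def choiPhi (a : Matrix (Fin 3) (Fin 3) ℂ) : Matrix (Fin 3) (Fin 3) ℂ :=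
  (1 / 2 : ℂ) •
    !![a 0 0 + a 2 2, -a 0 1, -a 0 2;
       -a 1 0, a 1 1 + a 0 0, -a 1 2;
       -a 2 0, -a 2 1, a 2 2 + a 1 1]

/-- `φ ⊗ id`: apply `φ` to the first tensor factor of an operator on `ℂ^3 ⊗ ℂ^3`. -/
noncomputable def phiFst (ρ : Matrix (Fin 3 × Fin 3) (Fin 3 × Fin 3) ℂ) :
    Matrix (Fin 3 × Fin 3) (Fin 3 × Fin 3) ℂ :=
  Matrix.of fun p q => choiPhi (Matrix.of fun i j => ρ (i, p.2) (j, q.2)) p.1 q.1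

/- ### Auxiliary material for the proof -/

lemma outer_psd {n : Type*} [Fintype n] [DecidableEq n] (v : n → ℂ) :
    (vecMulVec v (star v)).PosSemidef := by
  rw [posSemidef_iff_dotProduct_mulVec]
  constructor
  · ext p q
    simp [vecMulVec_apply, conjTranspose_apply, Pi.star_apply, mul_comm]
  · intro w
    have h : star w ⬝ᵥ vecMulVec v (star v) *ᵥ w
        = star (star w ⬝ᵥ v) * (star w ⬝ᵥ v) := by
      simp only [dotProduct, mulVec, vecMulVec_apply, Pi.star_apply, star_sum, star_mul',
        star_star, Finset.sum_mul, Finset.mul_sum]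
      congr 1; ext p; congr 1; ext q; ring
    rw [h]
    exact star_mul_self_nonneg _

lemma smul_psd {n : Type*} [Fintype n] {M : Matrix n n ℂ} (hM : M.PosSemidef)
    {c : ℝ} (hc : 0 ≤ c) : (((c : ℝ) : ℂ) • M).PosSemidef := by
  rw [posSemidef_iff_dotProduct_mulVec]
  constructor
  · ext p q
    simp [conjTranspose_apply, hM.1.apply]
  · intro w
    have h : star w ⬝ᵥ (((c : ℝ) : ℂ) • M) *ᵥ w = ((c : ℝ) : ℂ) * (star w ⬝ᵥ M *ᵥ w) := by
      simp [smul_mulVec, dotProduct_smul, smul_eq_mul]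
    rw [h]
    exact mul_nonneg (by exact_mod_cast hc) (hM.dotProduct_mulVec_nonneg w)

/-- Leftover diagonal in the decomposition of `(φ ⊗ id)(ρ(x,1/20))`. -/
noncomputable def dW (x : ℝ) : Fin 3 × Fin 3 → ℝ
  | (0, 0) => 41/40 - x/2 * (31275/10000)
  | (0, 1) => 401/40 - x/2
  | (0, 2) => 21/2 - x/2
  | (1, 0) => 421/40 - x/2
  | (1, 1) => 11/20 - x/2 * (2500/3853 + 10293/10000)
  | (1, 2) => 401/40 - x/2
  | (2, 0) => 21/2 - x/2
  | (2, 1) => 421/40 - x/2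
  | (2, 2) => 21/40 - x/2 * (10000/15863 + 10000/10293)

/-- Rank-one vectors used in the decomposition. -/
noncomputable def uvec (a : ℝ) (p q : Fin 3 × Fin 3) : Fin 3 × Fin 3 → ℂ :=
  fun r => if r = p then (a : ℂ) else if r = q then -1 else 0

lemma star_uvec (a : ℝ) (p q : Fin 3 × Fin 3) : star (uvec a p q) = uvec a p q := by
  ext r
  simp only [Pi.star_apply, uvec, apply_ite star, star_neg, star_one, star_zero,
    Complex.star_def, Complex.conj_ofReal]

set_option maxHeartbeats 2000000 in
lemma decomp (x : ℝ) :
    phiFst (rhoXT x (1/20)) =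
      ((5/321 : ℝ) : ℂ) • (
        Matrix.diagonal (fun p => ((dW x p : ℝ) : ℂ))
        + ((x/2/(15412/10000) : ℝ) : ℂ) •
            vecMulVec (uvec (15412/10000) (0,0) (1,1)) (star (uvec (15412/10000) (0,0) (1,1)))
        + ((x/2/(15863/10000) : ℝ) : ℂ) •
            vecMulVec (uvec (15863/10000) (0,0) (2,2)) (star (uvec (15863/10000) (0,0) (2,2)))
        + ((x/2/(10293/10000) : ℝ) : ℂ) •
            vecMulVec (uvec (10293/10000) (1,1) (2,2)) (star (uvec (10293/10000) (1,1) (2,2)))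
        + ((x/2 : ℝ) : ℂ) • vecMulVec (uvec 1 (0,1) (1,0)) (star (uvec 1 (0,1) (1,0)))
        + ((x/2 : ℝ) : ℂ) • vecMulVec (uvec 1 (0,2) (2,0)) (star (uvec 1 (0,2) (2,0)))
        + ((x/2 : ℝ) : ℂ) • vecMulVec (uvec 1 (1,2) (2,1)) (star (uvec 1 (1,2) (2,1)))) := by
  ext p q
  fin_cases p <;> fin_cases q <;>
  · simp (config := { decide := true }) only [phiFst, rhoXT, choiPhi, dW, uvec, diagEntry,
      xPos, Matrix.of_apply, Matrix.smul_apply, Matrix.add_apply, Matrix.diagonal_apply,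
      vecMulVec_apply, star_uvec, Matrix.cons_val', Matrix.cons_val_zero, Matrix.cons_val_one,
      Matrix.head_cons, Matrix.head_fin_const, Matrix.empty_val', Matrix.cons_val_fin_one,
      Prod.mk.injEq]
    norm_num
    try push_cast
    try ring

/-- for `t = 1/20` and `x ∈ (0.6044, 0.6554)`, the Choi map `φ`
applied directly to the first factor of `ρ(x,t)` yields a positive semidefinite
operator, i.e. it fails to detect the entanglement in this range. -/
theorem rhoXT_not_detected (x : ℝ) (hx1 : 0.6044 < x) (hx2 : x < 0.6554) :
    (phiFst (rhoXT x (1/20))).PosSemidef := by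
  rw [decomp x]
  have hx0 : 0 ≤ x := by linarith
  have hdW : ∀ p : Fin 3 × Fin 3, 0 ≤ dW x p := by
    intro p
    fin_cases p <;> simp only [dW] <;> nlinarith [hx2, hx0]
  have h1 : (0:ℝ) ≤ x/2/(15412/10000) := by linarith
  have h2 : (0:ℝ) ≤ x/2/(15863/10000) := by linarith
  have h3 : (0:ℝ) ≤ x/2/(10293/10000) := by linarith
  have h4 : (0:ℝ) ≤ x/2 := by linarith
  refine smul_psd ?_ (by norm_num)
  refine ((((((Matrix.PosSemidef.diagonal ?_).add
    (smul_psd (outer_psd _) h1)).add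
    (smul_psd (outer_psd _) h2)).add
    (smul_psd (outer_psd _) h3)).add
    (smul_psd (outer_psd _) h4)).add
    (smul_psd (outer_psd _) h4)).add
    (smul_psd (outer_psd _) h4)
  intro p
  simp only [Pi.zero_apply]
  exact Complex.zero_le_real.mpr (hdW p)
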